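/- arXiv:2503.00850 — 8 statements merged into one kernel-verified Lean document; each statement's English description precedes it below -/
import Mathlib

section
/- Let θ ∈ K̄ be algebraic of degree n over K and let δ ∈ D_m(θ) for some 1 ≤ m ≤ n. Then deg_K B(θ, δ) ≤ m, and equality holds if and only if m = 1 or δ > γ for every γ ∈ D_k(θ) and every k < m. -/
/-- The set of distances `D_m(θ) = {v(θ - b) : b ∈ K̄, deg_K b = m}`. -/
def distSet (K : Type*) {Kbar Γ : Type*} [Field K] [Field Kbar] [Algebra K Kbar]
    [AddCommGroup Γ] [LinearOrder Γ] [IsOrderedAddMonoid Γ] (v : Kbar → WithTop Γ) (θ : Kbar) (m : ℕ) :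
    Set (WithTop Γ) :=
  {δ : WithTop Γ | ∃ b : Kbar, (minpoly K b).natDegree = m ∧ δ = v (θ - b)}

/-- The closed ball `B(θ, δ) = {a ∈ K̄ : v(θ - a) ≥ δ}`. -/
def closedBall {Kbar Γ : Type*} [Field Kbar] [AddCommGroup Γ] [LinearOrder Γ] [IsOrderedAddMonoid Γ]
    (v : Kbar → WithTop Γ) (θ : Kbar) (δ : WithTop Γ) : Set Kbar :=
  {a : Kbar | δ ≤ v (θ - a)}

/-- The degree `deg_K B(θ, δ) = min {deg_K a : a ∈ B(θ, δ)}`. -/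
noncomputable def ballDeg (K : Type*) {Kbar Γ : Type*} [Field K] [Field Kbar]
    [Algebra K Kbar] [AddCommGroup Γ] [LinearOrder Γ] [IsOrderedAddMonoid Γ]
    (v : Kbar → WithTop Γ) (θ : Kbar) (δ : WithTop Γ) : ℕ :=
  sInf ((fun a : Kbar => (minpoly K a).natDegree) '' closedBall v θ δ)

/-- If `δ ∈ D_m(θ)` with `1 ≤ m ≤ n = deg_K θ`, then `deg_K B(θ,δ) ≤ m`, with equality iff
`m = 1` or `δ > γ` for every `γ ∈ D_k(θ)` and every `k < m`. -/
theorem ballDeg_le_of_mem_distSet {K Kbar Γ : Type*} [Field K] [Field Kbar] [Algebra K Kbar]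
    [IsAlgClosure K Kbar] [AddCommGroup Γ] [LinearOrder Γ] [IsOrderedAddMonoid Γ]
    (v : Kbar → WithTop Γ)
    (hv0 : ∀ x : Kbar, v x = ⊤ ↔ x = 0)
    (hvmul : ∀ x y : Kbar, v (x * y) = v x + v y)
    (hvadd : ∀ x y : Kbar, min (v x) (v y) ≤ v (x + y))
    (θ : Kbar) (n : ℕ) (hn : (minpoly K θ).natDegree = n)
    (m : ℕ) (hm1 : 1 ≤ m) (hmn : m ≤ n)
    (δ : WithTop Γ) (hδ : δ ∈ distSet K v θ m) :
    ballDeg K v θ δ ≤ m ∧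
      (ballDeg K v θ δ = m ↔
        m = 1 ∨ ∀ k < m, ∀ γ ∈ distSet K v θ k, γ < δ) := by
  obtain ⟨b, hb, hδb⟩ := hδ
  have hbmem : b ∈ closedBall v θ δ := le_of_eq hδb
  have hmmem : m ∈ (fun a : Kbar => (minpoly K a).natDegree) '' closedBall v θ δ :=
    ⟨b, hbmem, hb⟩
  have hle : ballDeg K v θ δ ≤ m := Nat.sInf_le hmmem
  have hne : ((fun a : Kbar => (minpoly K a).natDegree) '' closedBall v θ δ).Nonempty :=
    ⟨m, hmmem⟩
  obtain ⟨a, hamem, hadeg⟩ := Nat.sInf_mem hne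
  have hdegpos : ∀ x : Kbar, 0 < (minpoly K x).natDegree := fun x => by
    have : Algebra.IsAlgebraic K Kbar := IsAlgClosure.isAlgebraic
    exact minpoly.natDegree_pos (Algebra.IsIntegral.isIntegral x)
  refine ⟨hle, ?_, ?_⟩
  · intro heq
    by_cases hm : m = 1
    · exact Or.inl hm
    · refine Or.inr fun k hk γ hγ => ?_
      obtain ⟨c, hc, hγc⟩ := hγ
      by_contra hlt
      push_neg at hlt
      have hcmem : c ∈ closedBall v θ δ := by simpa [closedBall, ← hγc] using hlt
      have : ballDeg K v θ δ ≤ k := Nat.sInf_le ⟨c, hcmem, hc⟩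
      omega
  · rintro (hm | h)
    · have hb2 : ballDeg K v θ δ = (minpoly K a).natDegree := hadeg.symm
      have h1 := hdegpos a
      omega
    · refine le_antisymm hle ?_
      by_contra hlt
      push_neg at hlt
      have hb2 : ballDeg K v θ δ = (minpoly K a).natDegree := hadeg.symm
      have := h _ (lt_of_eq_of_lt hb2.symm hlt) (v (θ - a)) ⟨a, rfl, rfl⟩
      exact absurd hamem (not_le.mpr this)
end

section
/- Let θ ∈ K̄ be algebraic of degree n over K and let 1 ≤ m ≤ n. There exists δ ∈ Γ ∪ {∞} with deg_K B(θ, δ) = m if and only if m = 1 or there exists ε ∈ D_m(θ) such that ε > γ for every γ ∈ D_k(θ) and every k < m. (That is, the set of degrees of closed ultrametric balls centered at θ coincides with the canonical sequence of minimal degrees of the distances of θ.) -/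
/-- For `1 ≤ m ≤ n = deg_K θ`: there is a closed ball centered at `θ` of degree `m` over `K`
iff `m = 1` or some `ε ∈ D_m(θ)` satisfies `ε > γ` for every `γ ∈ D_k(θ)`, `k < m`. -/
theorem exists_ball_of_deg_iff {K Kbar Γ : Type*} [Field K] [Field Kbar] [Algebra K Kbar]
    [IsAlgClosure K Kbar] [AddCommGroup Γ] [LinearOrder Γ] [IsOrderedAddMonoid Γ]
    (v : Kbar → WithTop Γ)
    (hv0 : ∀ x : Kbar, v x = ⊤ ↔ x = 0)
    (hvmul : ∀ x y : Kbar, v (x * y) = v x + v y)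
    (hvadd : ∀ x y : Kbar, min (v x) (v y) ≤ v (x + y))
    (θ : Kbar) (n : ℕ) (hn : (minpoly K θ).natDegree = n)
    (m : ℕ) (hm1 : 1 ≤ m) (hmn : m ≤ n) :
    (∃ δ : WithTop Γ, ballDeg K v θ δ = m) ↔
      (m = 1 ∨ ∃ ε ∈ distSet K v θ m, ∀ k < m, ∀ γ ∈ distSet K v θ k, γ < ε) := by
  have halg : Algebra.IsAlgebraic K Kbar := IsAlgClosure.isAlgebraic
  have hdeg1 : ∀ a : Kbar, 1 ≤ (minpoly K a).natDegree := fun a =>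
    minpoly.natDegree_pos (Algebra.IsIntegral.isIntegral a)
  constructor
  · rintro ⟨δ, hδ⟩
    rcases eq_or_lt_of_le hm1 with h1 | h1
    · exact Or.inl h1.symm
    · have hne : ((fun a : Kbar => (minpoly K a).natDegree) '' closedBall v θ δ).Nonempty := by
        by_contra h
        rw [Set.not_nonempty_iff_eq_empty] at h
        rw [ballDeg, h, Nat.sInf_empty] at hδ
        omega
      have hmem := Nat.sInf_mem hne
      rw [ballDeg] at hδ
      rw [hδ] at hmem
      obtain ⟨a, ha, hda⟩ := hmem
      refine Or.inr ⟨v (θ - a), ⟨a, hda, rfl⟩, ?_⟩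
      rintro k hk γ ⟨b, hb, rfl⟩
      by_contra hge
      push_neg at hge
      have hbmem : b ∈ closedBall v θ δ := le_trans ha hge
      have := Nat.sInf_le (Set.mem_image_of_mem (fun a : Kbar => (minpoly K a).natDegree) hbmem)
      rw [hδ] at this
      simp only [hb] at this
      omega
  · rintro (rfl | ⟨ε, ⟨b, hb, rfl⟩, hmax⟩)
    · refine ⟨v θ, ?_⟩
      have h0 : (1 : ℕ) ∈ (fun a : Kbar => (minpoly K a).natDegree) '' closedBall v θ (v θ) := by
        refine ⟨0, ?_, ?_⟩
        · show v θ ≤ v (θ - 0); rw [sub_zero]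
        · simp [minpoly.zero]
      obtain ⟨a, _, hda⟩ := Nat.sInf_mem ⟨1, h0⟩
      exact le_antisymm (Nat.sInf_le h0) (le_of_le_of_eq (hdeg1 a) hda)
    · refine ⟨v (θ - b), ?_⟩
      have hbm : m ∈ (fun a : Kbar => (minpoly K a).natDegree) '' closedBall v θ (v (θ - b)) := by
        refine ⟨b, ?_, hb⟩
        show v (θ - b) ≤ v (θ - b)
        exact le_refl _
      have hmem := Nat.sInf_mem ⟨m, hbm⟩
      obtain ⟨a, ha, hda⟩ := hmem
      refine le_antisymm (Nat.sInf_le hbm) ?_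
      rw [ballDeg, ← hda]
      by_contra hlt
      push_neg at hlt
      have := hmax _ hlt (v (θ - a)) ⟨a, rfl, rfl⟩
      exact absurd ha (not_le.mpr this)
end

section
/- Let θ ∈ K̄ be algebraic of degree n over K and let 1 ≤ m < n be such that some ε ∈ D_m(θ) satisfies ε > γ for every γ ∈ D_k(θ) and every k < m. Then the family ℬ_m := {B(θ, δ) : δ ∈ Γ ∪ {∞}, deg_K B(θ, δ) = m} has a smallest element with respect to inclusion if and only if D_m(θ) has a maximal element; in that case, the smallest ball in ℬ_m is B(θ, max D_m(θ)). -/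
/-- The family `ℬ_m` of closed balls centered at `θ` of degree `m` over `K`. -/
def ballFamily (K : Type*) {Kbar Γ : Type*} [Field K] [Field Kbar]
    [Algebra K Kbar] [AddCommGroup Γ] [LinearOrder Γ] [IsOrderedAddMonoid Γ]
    (v : Kbar → WithTop Γ) (θ : Kbar) (m : ℕ) : Set (Set Kbar) :=
  {S : Set Kbar | ∃ δ : WithTop Γ, S = closedBall v θ δ ∧ ballDeg K v θ δ = m}

/-- For `1 ≤ m < n = deg_K θ` with some `ε ∈ D_m(θ)` exceeding all distances of smaller
degree: `ℬ_m` has a smallest element under inclusion iff `D_m(θ)` has a maximal element,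
in which case the smallest ball is `B(θ, max D_m(θ))`. -/
theorem smallest_ball_iff_max_dist {K Kbar Γ : Type*} [Field K] [Field Kbar] [Algebra K Kbar]
    [IsAlgClosure K Kbar] [AddCommGroup Γ] [LinearOrder Γ] [IsOrderedAddMonoid Γ]
    (v : Kbar → WithTop Γ)
    (hv0 : ∀ x : Kbar, v x = ⊤ ↔ x = 0)
    (hvmul : ∀ x y : Kbar, v (x * y) = v x + v y)
    (hvadd : ∀ x y : Kbar, min (v x) (v y) ≤ v (x + y))
    (θ : Kbar) (n : ℕ) (hn : (minpoly K θ).natDegree = n)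
    (m : ℕ) (hm1 : 1 ≤ m) (hmn : m < n)
    (hε : ∃ ε ∈ distSet K v θ m, ∀ k < m, ∀ γ ∈ distSet K v θ k, γ < ε) :
    ((∃ S ∈ ballFamily K v θ m, ∀ T ∈ ballFamily K v θ m, S ⊆ T) ↔
        ∃ δ, IsGreatest (distSet K v θ m) δ) ∧
      (∀ δ : WithTop Γ, IsGreatest (distSet K v θ m) δ →
        closedBall v θ δ ∈ ballFamily K v θ m ∧
          ∀ T ∈ ballFamily K v θ m, closedBall v θ δ ⊆ T) := by
  obtain ⟨ε, hεm, hεgt⟩ := hε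
  -- θ belongs to every ball
  have hθmem : ∀ δ : WithTop Γ, θ ∈ closedBall v θ δ := by
    intro δ
    simp only [closedBall, Set.mem_setOf_eq, sub_self, (hv0 0).mpr rfl, le_top]
  have hne : ∀ δ : WithTop Γ,
      ((fun a : Kbar => (minpoly K a).natDegree) '' closedBall v θ δ).Nonempty :=
    fun δ => ⟨_, θ, hθmem δ, rfl⟩
  -- Lemma A: if ε ≤ δ and the ball contains a point of degree m, then ballDeg = m
  have lemA : ∀ δ : WithTop Γ, ε ≤ δ →
      (∃ b : Kbar, (minpoly K b).natDegree = m ∧ δ ≤ v (θ - b)) → ballDeg K v θ δ = m := by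
    rintro δ hεδ ⟨b, hb, hbv⟩
    refine le_antisymm (Nat.sInf_le ⟨b, hbv, hb⟩) (le_csInf (hne δ) ?_)
    rintro k ⟨a, ha, rfl⟩
    by_contra hlt
    push_neg at hlt
    have := hεgt _ hlt _ ⟨a, rfl, rfl⟩
    exact absurd ha (not_le_of_gt (lt_of_lt_of_le this hεδ))
  -- Lemma B: if ballDeg δ = m then the ball contains a point of degree m
  have lemB : ∀ δ : WithTop Γ, ballDeg K v θ δ = m →
      ∃ a : Kbar, (minpoly K a).natDegree = m ∧ δ ≤ v (θ - a) := by
    intro δ hδ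
    have := Nat.sInf_mem (hne δ)
    rw [show sInf ((fun a : Kbar => (minpoly K a).natDegree) '' closedBall v θ δ)
        = ballDeg K v θ δ from rfl, hδ] at this
    obtain ⟨a, ha, hdeg⟩ := this
    exact ⟨a, hdeg, ha⟩
  -- nestedness
  have nest : ∀ δ δ' : WithTop Γ, δ ≤ δ' → closedBall v θ δ' ⊆ closedBall v θ δ :=
    fun δ δ' h a ha => le_trans h ha
  -- the key second part
  have key : ∀ δ : WithTop Γ, IsGreatest (distSet K v θ m) δ →
      closedBall v θ δ ∈ ballFamily K v θ m ∧
        ∀ T ∈ ballFamily K v θ m, closedBall v θ δ ⊆ T := by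
    rintro δ ⟨hδmem, hδub⟩
    obtain ⟨b, hb, hbeq⟩ := hδmem
    have hεδ : ε ≤ δ := hδub hεm
    have hmemfam : closedBall v θ δ ∈ ballFamily K v θ m :=
      ⟨δ, rfl, lemA δ hεδ ⟨b, hb, le_of_eq hbeq⟩⟩
    refine ⟨hmemfam, ?_⟩
    rintro T ⟨δ', rfl, hdeg'⟩
    obtain ⟨a, hadeg, hav⟩ := lemB δ' hdeg'
    have : v (θ - a) ≤ δ := hδub ⟨a, hadeg, rfl⟩
    exact nest δ' δ (le_trans hav this)
  refine ⟨⟨?_, fun ⟨δ, hδ⟩ => ⟨closedBall v θ δ, (key δ hδ).1, (key δ hδ).2⟩⟩, key⟩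
  rintro ⟨S, ⟨δ₀, rfl, hdeg₀⟩, hsmall⟩
  obtain ⟨a₀, ha₀deg, ha₀v⟩ := lemB δ₀ hdeg₀
  refine ⟨v (θ - a₀), ⟨a₀, ha₀deg, rfl⟩, ?_⟩
  rintro γ ⟨b, hbdeg, rfl⟩
  obtain ⟨b₀, hb₀deg, hb₀eq⟩ := hεm
  have hfam : closedBall v θ (v (θ - b) ⊔ ε) ∈ ballFamily K v θ m := by
    refine ⟨_, rfl, lemA _ le_sup_right ?_⟩
    rcases le_total (v (θ - b)) ε with h | h
    · exact ⟨b₀, hb₀deg, sup_le (le_of_le_of_eq h hb₀eq) (le_of_eq hb₀eq)⟩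
    · exact ⟨b, hbdeg, sup_le le_rfl h⟩
  have := hsmall _ hfam ha₀v
  exact le_trans le_sup_left this
end

section
/- Let (K, v) be a valued field whose valuation ring O_v is Henselian, let L/K be a finite field extension, and let w be a valuation on L extending v. Write e := (w(L*) : v(K*)) for the ramification index, f := [Lw : Kv] for the residue degree, and assume [L : K] = e·f (the extension is defectless), the quotient group w(L*)/v(K*) is cyclic, and the residue field extension Lw/Kv is separable. Let z̄ ∈ Lw be a generator of Lw over Kv, let φ ∈ O_v[X] be a monic polynomial whose reduction modulo the maximal ideal of O_v is the minimal polynomial of z̄ over Kv, let z ∈ L be a root of φ whose residue is z̄, and let α ∈ L with w(α) > 0 such that w(α) + v(K*) generates w(L*)/v(K*). Then θ := z + α generates L over K, i.e., L = K(θ); in particular, the minimal polynomial of θ over K has degree e·f. -/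
open IsLocalRing


section OreHelpers

variable {K L Γ₀ : Type*} [Field K] [Field L] [Algebra K L]
  [LinearOrderedCommGroupWithZero Γ₀]

lemma isUnit_iff_val_eq_one (w : Valuation L Γ₀) (x : w.valuationSubring) :
    IsUnit x ↔ w x = 1 := by
  constructor
  · rintro ⟨u, rfl⟩
    have h1 : ((u * u⁻¹ : w.valuationSubringˣ) : w.valuationSubring) = 1 := by
      rw [mul_inv_cancel]
      rfl
    have h2 : w ((u : w.valuationSubring) : L) *
        w (((u⁻¹ : w.valuationSubringˣ) : w.valuationSubring) : L) = 1 := by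
      rw [← map_mul]
      norm_cast
      rw [h1]
      simp
    have hu1 : w ((u : w.valuationSubring) : L) ≤ 1 := (u : w.valuationSubring).2
    have hu2 : w (((u⁻¹ : w.valuationSubringˣ) : w.valuationSubring) : L) ≤ 1 :=
      ((u⁻¹ : w.valuationSubringˣ) : w.valuationSubring).2
    refine le_antisymm hu1 ?_
    calc (1:Γ₀) = w ((u : w.valuationSubring) : L) * w _ := h2.symm
    _ ≤ w ((u : w.valuationSubring) : L) * 1 := mul_le_mul_right hu2 _
    _ = w ((u : w.valuationSubring) : L) := mul_one _
  · intro hx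
    have hx0 : (x : L) ≠ 0 := by
      intro h; rw [h] at hx; simp at hx
    have hinv : (x : L)⁻¹ ∈ w.valuationSubring := by
      rw [Valuation.mem_valuationSubring_iff, map_inv₀, hx]
      simp
    refine IsUnit.of_mul_eq_one (a := x) ⟨(x:L)⁻¹, hinv⟩ ?_
    ext
    push_cast
    exact mul_inv_cancel₀ hx0

lemma residue_ne_zero_iff_val (w : Valuation L Γ₀) (x : w.valuationSubring) :
    residue w.valuationSubring x ≠ 0 ↔ w x = 1 := by
  rw [← isUnit_iff_val_eq_one]
  exact IsLocalRing.residue_ne_zero_iff_isUnit x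

lemma lin_indep_of_distinct_cosets
    (v : Valuation K Γ₀) (w : Valuation L Γ₀)
    {ι₁ ι₂ : Type*} [Fintype ι₁] [Fintype ι₂]
    (x : ι₂ → L) (y : ι₁ → L)
    (hrow : ∀ c : ι₂ → K, (∃ j, c j ≠ 0) →
      ∃ a : K, a ≠ 0 ∧ w (∑ j, algebraMap K L (c j) * x j) = v a)
    (hv0 : ∀ a : K, a ≠ 0 → v a ≠ 0)
    (hy0 : ∀ i, w (y i) ≠ 0)
    (hy : ∀ i i' : ι₁, (∃ a : K, a ≠ 0 ∧ w (y i) = v a * w (y i')) → i = i') :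
    LinearIndependent K (fun p : ι₁ × ι₂ => x p.2 * y p.1) := by
  classical
  rw [Fintype.linearIndependent_iff]
  intro c hc
  by_contra hne
  push_neg at hne
  obtain ⟨p₀, hp₀⟩ := hne
  set t : ι₁ → L := fun i => (∑ j, algebraMap K L (c (i, j)) * x j) * y i with ht
  have hsum : ∑ i, t i = 0 := by
    rw [← hc, Fintype.sum_prod_type]
    refine Finset.sum_congr rfl fun i _ => ?_
    rw [ht]
    simp only [Finset.sum_mul]
    refine Finset.sum_congr rfl fun j _ => ?_
    rw [Algebra.smul_def]
    ring
  have hval : ∀ i : ι₁, (∃ j, c (i, j) ≠ 0) →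
      ∃ a : K, a ≠ 0 ∧ w (t i) = v a * w (y i) := by
    intro i hi
    obtain ⟨a, ha0, ha⟩ := hrow (fun j => c (i, j)) hi
    exact ⟨a, ha0, by rw [ht]; simp only [Valuation.map_mul, ha]⟩
  have hzero : ∀ i : ι₁, ¬ (∃ j, c (i, j) ≠ 0) → t i = 0 := by
    intro i hi
    push_neg at hi
    rw [ht]
    simp [hi]
  have htne : ∀ i : ι₁, (∃ j, c (i, j) ≠ 0) → w (t i) ≠ 0 := by
    intro i hi
    obtain ⟨a, ha0, ha⟩ := hval i hi
    rw [ha]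
    exact mul_ne_zero (hv0 a ha0) (hy0 i)
  have hdist : ∀ i i' : ι₁, (∃ j, c (i, j) ≠ 0) → (∃ j, c (i', j) ≠ 0) →
      w (t i) = w (t i') → i = i' := by
    intro i i' hi hi' hw
    obtain ⟨a, ha0, ha⟩ := hval i hi
    obtain ⟨b, hb0, hb⟩ := hval i' hi'
    refine hy i i' ⟨a⁻¹ * b, by simp [ha0, hb0], ?_⟩
    rw [map_mul, map_inv₀]
    rw [ha, hb] at hw
    have hva : v a ≠ 0 := hv0 a ha0
    field_simp at hw ⊢
    exact hw
  obtain ⟨i₁, -, hmax⟩ := Finset.exists_max_image Finset.univ (fun i => w (t i))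
    ⟨p₀.1, Finset.mem_univ _⟩
  have hi₁ : ∃ j, c (i₁, j) ≠ 0 := by
    by_contra h
    have h0 : t i₁ = 0 := hzero i₁ h
    have hle : w (t p₀.1) ≤ w (t i₁) := hmax p₀.1 (Finset.mem_univ _)
    rw [h0, map_zero] at hle
    exact htne p₀.1 ⟨p₀.2, hp₀⟩ (le_antisymm hle zero_le')
  have hlt : ∀ i ∈ Finset.univ \ {i₁}, w (t i) < w (t i₁) := by
    intro i hi
    rw [Finset.mem_sdiff, Finset.mem_singleton] at hi
    by_cases hrownz : ∃ j, c (i, j) ≠ 0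
    · exact lt_of_le_of_ne (hmax i (Finset.mem_univ _))
        fun h => hi.2 (hdist i i₁ hrownz hi₁ h)
    · rw [hzero i hrownz, map_zero]
      exact lt_of_le_of_ne zero_le' (Ne.symm (htne i₁ hi₁))
  have hfin := Valuation.map_sum_eq_of_lt w (Finset.mem_univ i₁) hlt
  rw [hsum, map_zero] at hfin
  exact htne i₁ hi₁ hfin.symm

end OreHelpers

/-- The value group `w(F*)`, as a subgroup of `Γ₀ˣ`. -/
def valueSubgroup {F Γ₀ : Type*} [Field F] [LinearOrderedCommGroupWithZero Γ₀]
    (w : Valuation F Γ₀) : Subgroup Γ₀ˣ where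
  carrier := {γ : Γ₀ˣ | ∃ x : F, x ≠ 0 ∧ w x = (γ : Γ₀)}
  one_mem' := ⟨1, one_ne_zero, by simp⟩
  mul_mem' := by
    rintro a b ⟨x, hx, hwx⟩ ⟨y, hy, hwy⟩
    exact ⟨x * y, mul_ne_zero hx hy, by rw [map_mul, hwx, hwy]; rfl⟩
  inv_mem' := by
    rintro a ⟨x, hx, hwx⟩
    refine ⟨x⁻¹, inv_ne_zero hx, ?_⟩
    rw [map_inv₀, hwx, Units.val_inv_eq_inv_val]

set_option maxHeartbeats 1000000 in
/-- Generalization of Ore's theorem: for a Henselian valued field `(K, v)` and a finite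
defectless extension `(L, w)` with cyclic value group quotient and separable residue
extension, if `z` is a root of a monic lift `φ` of the minimal polynomial of a residue
generator `z̄` with residue `z̄`, and `α` has positive value generating `w(L*)/v(K*)`,
then `θ = z + α` generates `L/K`; in particular `deg (minpoly θ) = e·f`. -/
theorem ore_generalization {K L Γ₀ : Type*} [Field K] [Field L] [Algebra K L]
    [FiniteDimensional K L] [LinearOrderedCommGroupWithZero Γ₀]
    (v : Valuation K Γ₀) (w : Valuation L Γ₀)
    (hext : ∀ x : K, w (algebraMap K L x) = v x)
    [HenselianLocalRing v.valuationSubring]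
    [Algebra (ResidueField v.valuationSubring) (ResidueField w.valuationSubring)]
    (hcompat : ∀ (x : K) (hx : x ∈ v.valuationSubring)
        (hx' : algebraMap K L x ∈ w.valuationSubring),
      algebraMap (ResidueField v.valuationSubring) (ResidueField w.valuationSubring)
          (residue _ ⟨x, hx⟩) =
        residue _ ⟨algebraMap K L x, hx'⟩)
    [Algebra.IsSeparable (ResidueField v.valuationSubring)
      (ResidueField w.valuationSubring)]
    (e f : ℕ)
    (he : (valueSubgroup v).relIndex (valueSubgroup w) = e)
    (hf : Module.finrank (ResidueField v.valuationSubring)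
      (ResidueField w.valuationSubring) = f)
    (hd : Module.finrank K L = e * f)
    (hcyc : ∃ γ₀ ∈ valueSubgroup w, ∀ γ ∈ valueSubgroup w,
      ∃ n : ℤ, γ / γ₀ ^ n ∈ valueSubgroup v)
    (zbar : ResidueField w.valuationSubring)
    (hzbar : IntermediateField.adjoin (ResidueField v.valuationSubring) {zbar} = ⊤)
    (φ : Polynomial v.valuationSubring) (hφmonic : φ.Monic)
    (hφred : φ.map (residue v.valuationSubring) =
      minpoly (ResidueField v.valuationSubring) zbar)
    (z : L)
    (hzroot : Polynomial.eval₂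
      ((algebraMap K L).comp (algebraMap v.valuationSubring K)) z φ = 0)
    (hzmem : z ∈ w.valuationSubring)
    (hzres : residue w.valuationSubring ⟨z, hzmem⟩ = zbar)
    (α : L) (hα0 : α ≠ 0) (hαpos : w α < 1)
    (γα : Γ₀ˣ) (hγα : w α = (γα : Γ₀))
    (hαgen : ∀ γ ∈ valueSubgroup w, ∃ n : ℤ, γ / γα ^ n ∈ valueSubgroup v) :
    IntermediateField.adjoin K {z + α} = ⊤ ∧
      (minpoly K (z + α)).natDegree = e * f := by
  have hK0 : ∀ a : K, a ≠ 0 → v a ≠ 0 := fun a ha => by rwa [Valuation.ne_zero_iff]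
  have hfinpos : 0 < Module.finrank K L := Module.finrank_pos
  have hef : 0 < e * f := hd ▸ hfinpos
  have hepos : 0 < e := Nat.pos_of_ne_zero (by rintro rfl; simp at hef)
  have hfpos : 0 < f := Nat.pos_of_ne_zero (by rintro rfl; simp at hef)
  have hκfin : FiniteDimensional (ResidueField v.valuationSubring)
      (ResidueField w.valuationSubring) := FiniteDimensional.of_finrank_pos (hf ▸ hfpos)
  -- the ring hom between valuation rings
  have hgmem : ∀ x : v.valuationSubring, algebraMap K L (x : K) ∈ w.valuationSubring :=
    fun x => by rw [Valuation.mem_valuationSubring_iff, hext]; exact x.2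
  let g : v.valuationSubring →+* w.valuationSubring :=
    { toFun := fun x => ⟨algebraMap K L (x : K), hgmem x⟩
      map_one' := by ext; simp
      map_mul' := fun a b => by ext; simp
      map_zero' := by ext; simp
      map_add' := fun a b => by ext; simp }
  have hgres : (residue w.valuationSubring).comp g =
      (algebraMap (ResidueField v.valuationSubring)
        (ResidueField w.valuationSubring)).comp (residue v.valuationSubring) := by
    ext x
    exact (hcompat x x.2 (hgmem x)).symm
  -- θ and its residue
  set θ := z + α with hθdef
  have hαmem : α ∈ w.valuationSubring := le_of_lt hαpos
  have hθmem : θ ∈ w.valuationSubring := Subring.add_mem _ hzmem hαmem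
  set Θ : w.valuationSubring := ⟨θ, hθmem⟩ with hΘdef
  have hAres : residue w.valuationSubring ⟨α, hαmem⟩ = 0 := by
    rw [IsLocalRing.residue_eq_zero_iff, mem_maximalIdeal, mem_nonunits_iff,
      isUnit_iff_val_eq_one]
    exact ne_of_lt hαpos
  have hΘres : residue w.valuationSubring Θ = zbar := by
    have hsplit : Θ = ⟨z, hzmem⟩ + ⟨α, hαmem⟩ := rfl
    rw [hsplit, map_add, hAres, add_zero, hzres]
  -- degree of the minimal polynomial of zbar
  have hzint : IsIntegral (ResidueField v.valuationSubring) zbar := IsIntegral.of_finite _ _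
  have hdegmin : (minpoly (ResidueField v.valuationSubring) zbar).natDegree = f := by
    have h1 := IntermediateField.adjoin.finrank hzint
    rw [hzbar, IntermediateField.finrank_top'] at h1
    rw [← h1, hf]
  have hpowind : LinearIndependent (ResidueField v.valuationSubring)
      (fun j : Fin f => zbar ^ (j : ℕ)) := by
    have := linearIndependent_pow (K := ResidueField v.valuationSubring) zbar
    rwa [hdegmin] at this
  -- the polynomial over L and over the valuation ring of w
  set ρ : v.valuationSubring →+* L :=
    (algebraMap K L).comp (algebraMap v.valuationSubring K) with hρdef
  set φL : Polynomial L := φ.map ρ with hφLdef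
  have hφLz : φL.eval z = 0 := by rw [hφLdef, Polynomial.eval_map]; exact hzroot
  set φO : Polynomial w.valuationSubring := φ.map g with hφOdef
  have hφOL : φO.map (algebraMap w.valuationSubring L) = φL := by
    rw [hφOdef, hφLdef, Polynomial.map_map]
    rfl
  have hψL : (Polynomial.taylor ⟨z, hzmem⟩ φO).map (algebraMap w.valuationSubring L)
      = Polynomial.taylor z φL := by
    rw [Polynomial.taylor_apply, Polynomial.taylor_apply, Polynomial.map_comp, hφOL]
    congr 1
    rw [Polynomial.map_add, Polynomial.map_X, Polynomial.map_C]
    rfl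
  set β := φL.eval θ with hβdef
  -- coefficient bounds
  have hcoeff_le : ∀ i, w ((Polynomial.taylor z φL).coeff i) ≤ 1 := by
    intro i
    rw [← hψL, Polynomial.coeff_map]
    rw [ValuationSubring.algebraMap_apply]
    exact (w.mem_valuationSubring_iff _).mp (SetLike.coe_mem _)
  have hγα0 : (γα : Γ₀) ≠ 0 := γα.ne_zero
  have hγα1 : (γα : Γ₀) < 1 := hγα ▸ hαpos
  -- value of the linear Taylor coefficient
  have hc1 : w ((Polynomial.taylor z φL).coeff 1) = 1 := by
    rw [← hψL, Polynomial.coeff_map]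
    refine (residue_ne_zero_iff_val w _).mp ?_
    rw [Polynomial.taylor_coeff_one]
    have h2 : residue w.valuationSubring (φO.derivative.eval ⟨z, hzmem⟩) =
        ((φO.map (residue w.valuationSubring)).derivative).eval zbar := by
      conv_rhs => rw [Polynomial.derivative_map, Polynomial.eval_map]
      rw [← hzres]
      exact (Polynomial.eval₂_at_apply (residue w.valuationSubring) _).symm
    have h3 : φO.map (residue w.valuationSubring) =
        (minpoly (ResidueField v.valuationSubring) zbar).map
          (algebraMap (ResidueField v.valuationSubring)
            (ResidueField w.valuationSubring)) := by
      rw [hφOdef, Polynomial.map_map, hgres, ← Polynomial.map_map, hφred]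
    rw [h2, h3]
    have hsep : (minpoly (ResidueField v.valuationSubring) zbar).Separable :=
      Algebra.IsSeparable.isSeparable _ zbar
    have h4 := hsep.eval₂_derivative_ne_zero
      (algebraMap (ResidueField v.valuationSubring) (ResidueField w.valuationSubring))
      (x := zbar) (by rw [← Polynomial.aeval_def]; exact minpoly.aeval _ zbar)
    rw [Polynomial.derivative_map, Polynomial.eval_map]
    exact h4
  -- natDegree of φL
  have hφLmonic : φL.Monic := hφmonic.map ρ
  have hNdeg : φL.natDegree = f := by
    rw [hφLdef, hφmonic.natDegree_map, ← hdegmin, ← hφred, hφmonic.natDegree_map]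
  -- value of β
  have hβsum : β = ∑ i ∈ Finset.range (f + 1), (Polynomial.taylor z φL).coeff i * α ^ i := by
    have h1 : Polynomial.eval θ φL = (Polynomial.taylor z φL).eval α := by
      rw [Polynomial.taylor_eval, add_comm]
    rw [hβdef, h1, Polynomial.eval_eq_sum_range, Polynomial.natDegree_taylor, hNdeg]
  have hterm1 : w ((Polynomial.taylor z φL).coeff 1 * α ^ 1) = (γα : Γ₀) := by
    rw [Valuation.map_mul, map_pow, hc1, hγα, one_mul, pow_one]
  have hterm1ne : w ((Polynomial.taylor z φL).coeff 1 * α ^ 1) ≠ 0 := by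
    rw [hterm1]; exact hγα0
  have hmem1 : 1 ∈ Finset.range (f + 1) := Finset.mem_range.mpr (by omega)
  have hlt : ∀ i ∈ Finset.range (f + 1) \ {1},
      w ((Polynomial.taylor z φL).coeff i * α ^ i) <
        w ((Polynomial.taylor z φL).coeff 1 * α ^ 1) := by
    intro i hi
    rw [Finset.mem_sdiff, Finset.mem_singleton] at hi
    rw [hterm1]
    rcases Nat.lt_or_ge i 2 with h2 | h2
    · have hi0 : i = 0 := by omega
      subst hi0
      rw [pow_zero, mul_one, Polynomial.taylor_coeff_zero, hφLz, map_zero]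
      exact zero_lt_iff.mpr hγα0
    · have hb : w ((Polynomial.taylor z φL).coeff i * α ^ i) ≤ (γα : Γ₀) ^ i := by
        rw [Valuation.map_mul, map_pow, hγα]
        calc w ((Polynomial.taylor z φL).coeff i) * (γα : Γ₀) ^ i
            ≤ 1 * (γα : Γ₀) ^ i := mul_le_mul_left (hcoeff_le i) _
          _ = (γα : Γ₀) ^ i := one_mul _
      refine lt_of_le_of_lt hb ?_
      have hlt2 := pow_lt_pow_right_of_lt_one₀ (zero_lt_iff.mpr hγα0) hγα1
        (show 1 < i by omega)
      simpa using hlt2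
  have hβval : w β = (γα : Γ₀) := by
    rw [hβsum, Valuation.map_sum_eq_of_lt w hmem1 (fun i hi => hlt i (by simpa using hi)), hterm1]
  -- group-theoretic facts about the value groups
  have hγαmem : γα ∈ valueSubgroup w := ⟨α, hα0, hγα⟩
  have hdvd : ∀ m : ℤ, γα ^ m ∈ valueSubgroup v → (e : ℤ) ∣ m := by
    set H := (valueSubgroup v).subgroupOf (valueSubgroup w) with hH
    set q : (valueSubgroup w) ⧸ H := QuotientGroup.mk (⟨γα, hγαmem⟩ : valueSubgroup w)
      with hq
    have hsurj : ∀ x : (valueSubgroup w) ⧸ H, x ∈ Subgroup.zpowers q := by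
      intro x
      obtain ⟨⟨γ, hγ⟩, rfl⟩ := QuotientGroup.mk_surjective x
      obtain ⟨n, hn⟩ := hαgen γ hγ
      refine ⟨n, ?_⟩
      show q ^ n = QuotientGroup.mk (⟨γ, hγ⟩ : valueSubgroup w)
      rw [hq, ← QuotientGroup.mk_zpow, QuotientGroup.eq]
      rw [Subgroup.mem_subgroupOf]
      have hcoe : ((((⟨γα, hγαmem⟩ : valueSubgroup w) ^ n)⁻¹ *
          (⟨γ, hγ⟩ : valueSubgroup w) : valueSubgroup w) : Γ₀ˣ) = γ / γα ^ n := by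
        push_cast
        rw [div_eq_mul_inv, mul_comm]
      rw [hcoe]
      exact hn
    have horder : orderOf q = e := by
      have h1 : Subgroup.zpowers q = ⊤ := by
        rw [Subgroup.eq_top_iff']
        exact hsurj
      have h2 := Nat.card_zpowers q
      rw [h1] at h2
      have h3 : Nat.card ((valueSubgroup w) ⧸ H) = e := by
        rw [← Subgroup.index_eq_card]
        exact he
      rw [← h3, ← h2]
      exact Nat.card_congr (Subgroup.topEquiv).toEquiv
    intro m hm
    have hq1 : q ^ m = 1 := by
      rw [hq, ← QuotientGroup.mk_zpow, QuotientGroup.eq_one_iff]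
      rw [Subgroup.mem_subgroupOf]
      have hcoe : (((⟨γα, hγαmem⟩ : valueSubgroup w) ^ m : valueSubgroup w) : Γ₀ˣ)
          = γα ^ m := by push_cast; rfl
      rw [hcoe]
      exact hm
    rw [← horder]
    exact orderOf_dvd_iff_zpow_eq_one.mpr hq1
  -- the rows: linear combinations of powers of θ
  have hrow : ∀ c : Fin f → K, (∃ j, c j ≠ 0) →
      ∃ a : K, a ≠ 0 ∧ w (∑ j, algebraMap K L (c j) * θ ^ (j : ℕ)) = v a := by
    intro c hc
    obtain ⟨j₁, hj₁⟩ := hc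
    obtain ⟨j₀, -, hmax⟩ := Finset.exists_max_image Finset.univ (fun j => v (c j))
      ⟨j₁, Finset.mem_univ _⟩
    have hcj₀ : c j₀ ≠ 0 := by
      intro h
      have hle := hmax j₁ (Finset.mem_univ _)
      rw [h, map_zero] at hle
      exact hK0 _ hj₁ (le_antisymm hle zero_le')
    refine ⟨c j₀, hcj₀, ?_⟩
    have hdmem : ∀ j, c j / c j₀ ∈ v.valuationSubring := fun j => by
      rw [Valuation.mem_valuationSubring_iff, map_div₀]
      exact div_le_one_of_le₀ (hmax j (Finset.mem_univ _)) zero_le'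
    set S : w.valuationSubring := ∑ j, g ⟨c j / c j₀, hdmem j⟩ * Θ ^ (j : ℕ) with hS
    have hSres : residue w.valuationSubring S ≠ 0 := by
      intro h0
      rw [hS, map_sum] at h0
      have h1 : ∀ j : Fin f, residue w.valuationSubring (g ⟨c j / c j₀, hdmem j⟩ * Θ ^ (j:ℕ))
          = (residue v.valuationSubring ⟨c j / c j₀, hdmem j⟩) • zbar ^ (j : ℕ) := by
        intro j
        rw [map_mul, map_pow, hΘres, Algebra.smul_def]
        congr 1
        exact (hcompat (c j / c j₀) (hdmem j) (hgmem ⟨c j / c j₀, hdmem j⟩)).symm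
      rw [Finset.sum_congr rfl (fun j _ => h1 j)] at h0
      have h2 := (Fintype.linearIndependent_iff.mp hpowind)
        (fun j => residue v.valuationSubring ⟨c j / c j₀, hdmem j⟩) h0 j₀
      have h3 : (⟨c j₀ / c j₀, hdmem j₀⟩ : v.valuationSubring) = 1 := by
        ext
        exact div_self hcj₀
      rw [h3, map_one] at h2
      exact one_ne_zero h2
    have hS1 : w (algebraMap w.valuationSubring L S) = 1 :=
      (residue_ne_zero_iff_val w S).mp hSres
    have hScoe : algebraMap w.valuationSubring L S
        = ∑ j : Fin f, algebraMap K L (c j / c j₀) * θ ^ (j : ℕ) := by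
      rw [hS, map_sum]
      refine Finset.sum_congr rfl fun j _ => ?_
      rw [map_mul, map_pow]
      rfl
    have hsplit : (∑ j, algebraMap K L (c j) * θ ^ (j : ℕ))
        = algebraMap K L (c j₀) * algebraMap w.valuationSubring L S := by
      rw [hScoe, Finset.mul_sum]
      refine Finset.sum_congr rfl fun j _ => ?_
      rw [← mul_assoc, ← map_mul, mul_div_cancel₀ _ hcj₀]
    rw [hsplit, Valuation.map_mul, hS1, mul_one, hext]
  -- values of powers of β lie in distinct cosets
  have hβpne : ∀ i : Fin e, w (β ^ (i : ℕ)) ≠ 0 := by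
    intro i
    rw [map_pow, hβval]
    exact pow_ne_zero _ hγα0
  have hβy : ∀ i i' : Fin e,
      (∃ a : K, a ≠ 0 ∧ w (β ^ (i : ℕ)) = v a * w (β ^ (i' : ℕ))) → i = i' := by
    rintro i i' ⟨a, ha0, hai⟩
    rw [map_pow, map_pow, hβval] at hai
    have hu : γα ^ ((i : ℤ) - (i' : ℤ)) ∈ valueSubgroup v := by
      refine ⟨a, ha0, ?_⟩
      push_cast
      rw [zpow_sub₀ hγα0, zpow_natCast, zpow_natCast]
      rw [eq_div_iff (pow_ne_zero _ hγα0)]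
      exact hai.symm
    have hd2 := hdvd _ hu
    have hz : (i : ℤ) - (i' : ℤ) = 0 := by
      refine Int.eq_zero_of_dvd_of_natAbs_lt_natAbs hd2 ?_
      have h1 : (i : ℕ) < e := i.isLt
      have h2 : (i' : ℕ) < e := i'.isLt
      omega
    have : (i : ℕ) = (i' : ℕ) := by omega
    exact Fin.ext this
  -- the linearly independent family
  have hind : LinearIndependent K
      (fun p : Fin e × Fin f => θ ^ ((p.2 : ℕ)) * β ^ ((p.1 : ℕ))) :=
    lin_indep_of_distinct_cosets v w (fun j : Fin f => θ ^ (j : ℕ))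
      (fun i : Fin e => β ^ (i : ℕ)) hrow hK0 hβpne hβy
  -- everything lies in the simple extension generated by θ
  set M := IntermediateField.adjoin K {θ} with hM
  have hθM : θ ∈ M := IntermediateField.mem_adjoin_simple_self K θ
  have hβM : β ∈ M := by
    have hb : β = Polynomial.aeval θ (φ.map (algebraMap v.valuationSubring K)) := by
      rw [hβdef, hφLdef, Polynomial.aeval_def, ← Polynomial.eval_map,
        Polynomial.map_map]
    rw [hb]
    exact IntermediateField.algebra_adjoin_le_adjoin K {θ}
      (Polynomial.aeval_mem_adjoin_singleton K θ)
  have hmemM : ∀ p : Fin e × Fin f, θ ^ ((p.2 : ℕ)) * β ^ ((p.1 : ℕ)) ∈ M :=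
    fun p => mul_mem (pow_mem hθM _) (pow_mem hβM _)
  have hindM : LinearIndependent K
      (fun p : Fin e × Fin f => (⟨θ ^ ((p.2 : ℕ)) * β ^ ((p.1 : ℕ)), hmemM p⟩ : M)) := by
    refine LinearIndependent.of_comp (M.val.toLinearMap) ?_
    exact hind
  have hfr : e * f ≤ Module.finrank K M := by
    have hcard := hindM.fintype_card_le_finrank
    simpa [Fintype.card_prod, mul_comm] using hcard
  have hMtop : M = ⊤ := by
    have h1 : Module.finrank K (Subalgebra.toSubmodule M.toSubalgebra)
        = Module.finrank K L := by
      refine le_antisymm (Submodule.finrank_le _) ?_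
      rw [hd]
      exact hfr
    have h2 : Subalgebra.toSubmodule M.toSubalgebra = ⊤ :=
      Submodule.eq_top_of_finrank_eq h1
    have h3 : M.toSubalgebra = ⊤ := by rwa [Algebra.toSubmodule_eq_top] at h2
    refine IntermediateField.toSubalgebra_injective ?_
    rw [h3, IntermediateField.top_toSubalgebra]
  refine ⟨hMtop, ?_⟩
  have hint : IsIntegral K θ := IsIntegral.of_finite K θ
  have hadj := IntermediateField.adjoin.finrank hint
  calc (minpoly K θ).natDegree = Module.finrank K (IntermediateField.adjoin K {θ}) :=
        hadj.symm
    _ = Module.finrank K (⊤ : IntermediateField K L) := by rw [← hM, hMtop]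
    _ = Module.finrank K L := IntermediateField.finrank_top'
    _ = e * f := hd
end

section
/- Let (K, v) be a valued field, L/K a finite field extension, and w a valuation on L extending v. Write e := (w(L*) : v(K*)) and f := [Lw : Kv], and assume [L : K] = e·f. Let α ∈ L be such that e is the least positive integer with e·w(α) ∈ v(K*), let u ∈ K with v(u) = e·w(α), and suppose that the residue of α^e/u (an element of w-value 0) generates Lw over Kv, i.e., [Kv((α^e/u)w) : Kv] = f. Then L = K(α). -/
open IsLocalRing

/-- Suppose `[L : K] = e·f` where `e` is the ramification index and `f` the residue degree.
If `α ∈ L` is such that `e` is the least positive integer with `e·w(α) ∈ v(K*)`, `u ∈ K`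
has `v(u) = e·w(α)`, and the residue of `α^e/u` generates a degree-`f` subextension of
`Lw/Kv`, then `L = K(α)`. -/
theorem depth_one_generator {K L Γ₀ : Type*} [Field K] [Field L] [Algebra K L]
    [FiniteDimensional K L] [LinearOrderedCommGroupWithZero Γ₀]
    (v : Valuation K Γ₀) (w : Valuation L Γ₀)
    (hext : ∀ x : K, w (algebraMap K L x) = v x)
    [Algebra (ResidueField v.valuationSubring) (ResidueField w.valuationSubring)]
    (hcompat : ∀ (x : K) (hx : x ∈ v.valuationSubring)
        (hx' : algebraMap K L x ∈ w.valuationSubring),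
      algebraMap (ResidueField v.valuationSubring) (ResidueField w.valuationSubring)
          (residue _ ⟨x, hx⟩) =
        residue _ ⟨algebraMap K L x, hx'⟩)
    (e f : ℕ)
    (he : (valueSubgroup v).relIndex (valueSubgroup w) = e)
    (hf : Module.finrank (ResidueField v.valuationSubring)
      (ResidueField w.valuationSubring) = f)
    (hd : Module.finrank K L = e * f)
    (α : L) (hα0 : α ≠ 0)
    (hepos : 0 < e)
    (hleast : ∀ k : ℕ, 0 < k → k < e → ¬∃ x : K, x ≠ 0 ∧ v x = w α ^ k)
    (u : K) (hu0 : u ≠ 0) (hu : v u = w α ^ e)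
    (hmem : α ^ e / algebraMap K L u ∈ w.valuationSubring)
    (hgen : Module.finrank (ResidueField v.valuationSubring)
      (IntermediateField.adjoin (ResidueField v.valuationSubring)
        {residue w.valuationSubring ⟨α ^ e / algebraMap K L u, hmem⟩}) = f) :
    IntermediateField.adjoin K {α} = ⊤ := by

  set kv := ResidueField v.valuationSubring with hkv
  set kw := ResidueField w.valuationSubring with hkw
  set t : L := α ^ e / algebraMap K L u with htdef
  set θ : kw := residue w.valuationSubring ⟨t, hmem⟩ with hθdef
  -- basic nonvanishing facts
  have hαw : w α ≠ 0 := by simp [Valuation.zero_iff, hα0]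
  have huv : v u ≠ 0 := by rw [hu]; exact pow_ne_zero _ hαw
  have huL0 : algebraMap K L u ≠ 0 := by simpa using hu0
  have hwt : w t = 1 := by
    rw [htdef, map_div₀, map_pow, hext, hu, div_self (pow_ne_zero _ hαw)]
  have hfrpos : 0 < Module.finrank K L := Module.finrank_pos
  have hfpos : 0 < f := by
    rcases Nat.eq_zero_or_pos f with h | h
    · rw [hd, h, mul_zero] at hfrpos; exact absurd hfrpos (lt_irrefl 0)
    · exact h
  -- θ is integral of degree f
  haveI hfd : FiniteDimensional kv (IntermediateField.adjoin kv {θ}) := by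
    apply FiniteDimensional.of_finrank_pos
    rw [hgen]; exact hfpos
  have hθint : IsIntegral kv θ := by
    have h1 : IsIntegral kv (IntermediateField.AdjoinSimple.gen kv θ) :=
      IsIntegral.of_finite _ _
    have := IntermediateField.isIntegral_iff.mp h1
    rwa [IntermediateField.AdjoinSimple.coe_gen] at this
  have hmin : (minpoly kv θ).natDegree = f := by
    rw [← IntermediateField.adjoin.finrank hθint]; exact hgen
  -- linear independence of powers of θ below degree f
  have hdeg : ∀ c : Fin f → kv, (∃ j, c j ≠ 0) →
      (∑ j : Fin f, algebraMap kv kw (c j) * θ ^ (j : ℕ)) ≠ 0 := by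
    rintro c ⟨j0, hj0⟩ hsum
    set p : Polynomial kv := ∑ j : Fin f, Polynomial.C (c j) * Polynomial.X ^ (j : ℕ) with hp
    have hpeval : Polynomial.aeval θ p = 0 := by
      rw [hp, map_sum]
      simp only [map_mul, Polynomial.aeval_C, map_pow, Polynomial.aeval_X]
      exact hsum
    have hcoeff : ∀ m : Fin f, p.coeff (m : ℕ) = c m := by
      intro m
      rw [hp, Polynomial.finset_sum_coeff]
      simp only [Polynomial.coeff_C_mul_X_pow]
      rw [Finset.sum_eq_single m]
      · simp
      · intro b _ hb
        rw [if_neg]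
        simp only [Fin.val_eq_val]
        exact fun h => hb h.symm
      · simp
    have hp0 : p ≠ 0 := by
      intro h
      apply hj0
      rw [← hcoeff j0, h, Polynomial.coeff_zero]
    have hdp : p.degree < (f : ℕ) := by
      rw [Polynomial.degree_lt_iff_coeff_zero]
      intro m hm
      rw [hp, Polynomial.finset_sum_coeff]
      apply Finset.sum_eq_zero
      intro j _
      rw [Polynomial.coeff_C_mul_X_pow]
      have : m ≠ (j : ℕ) := by
        have := j.isLt; omega
      simp [this]
    have hle := minpoly.degree_le_of_ne_zero kv θ hp0 hpeval
    rw [Polynomial.degree_eq_natDegree (minpoly.ne_zero hθint), hmin] at hle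
    exact absurd (lt_of_le_of_lt hle hdp) (lt_irrefl _)
  -- residue nonzero implies valuation one
  have hone : ∀ (y : L) (hy : y ∈ w.valuationSubring),
      residue w.valuationSubring ⟨y, hy⟩ ≠ 0 → w y = 1 := by
    intro y hy hres
    have hnm : (⟨y, hy⟩ : w.valuationSubring) ∉ maximalIdeal w.valuationSubring :=
      fun h => hres (Ideal.Quotient.eq_zero_iff_mem.mpr h)
    have hunit : IsUnit (⟨y, hy⟩ : w.valuationSubring) := by
      by_contra h; exact hnm ((mem_maximalIdeal _).mpr h)
    obtain ⟨z, hz⟩ := isUnit_iff_exists_inv.mp hunit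
    have hz' : y * (z : L) = 1 := by simpa using congrArg Subtype.val hz
    have h1 : w y * w (z : L) = 1 := by rw [← map_mul, hz', map_one]
    refine le_antisymm ((w.mem_valuationSubring_iff y).mp hy) ?_
    calc (1 : Γ₀) = w y * w (z : L) := h1.symm
      _ ≤ w y * 1 := mul_le_mul_right ((w.mem_valuationSubring_iff _).mp z.2) _
      _ = w y := mul_one _
  -- the value of an inner sum
  have lemA : ∀ (c : Fin f → K) (m : Fin f), c m ≠ 0 → (∀ j, v (c j) ≤ v (c m)) →
      w (∑ j : Fin f, algebraMap K L (c j) * t ^ (j : ℕ)) = v (c m) := by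
    intro c m hm hmax
    have hvm : v (c m) ≠ 0 := by simp [Valuation.zero_iff, hm]
    set d : Fin f → K := fun j => c j / c m with hd'
    have hdv : ∀ j, d j ∈ v.valuationSubring := by
      intro j
      rw [Valuation.mem_valuationSubring_iff, hd', map_div₀]
      exact div_le_one_of_le₀ (hmax j) zero_le'
    have hdw : ∀ j, algebraMap K L (d j) ∈ w.valuationSubring := by
      intro j
      rw [Valuation.mem_valuationSubring_iff, hext]
      exact (v.mem_valuationSubring_iff _).mp (hdv j)
    set Y : w.valuationSubring :=
      ∑ j : Fin f, (⟨algebraMap K L (d j), hdw j⟩ * (⟨t, hmem⟩ : w.valuationSubring) ^ (j : ℕ))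
      with hY
    have hYval : (Y : L) = ∑ j : Fin f, algebraMap K L (d j) * t ^ (j : ℕ) := by
      rw [hY]
      push_cast
      rfl
    have hYres : residue w.valuationSubring Y =
        ∑ j : Fin f, algebraMap kv kw (residue v.valuationSubring ⟨d j, hdv j⟩) * θ ^ (j : ℕ) := by
      rw [hY, map_sum]
      refine Finset.sum_congr rfl fun j _ => ?_
      rw [map_mul, map_pow, hcompat (d j) (hdv j) (hdw j)]
    have hdm : residue v.valuationSubring ⟨d m, hdv m⟩ = 1 := by
      have h1 : (⟨d m, hdv m⟩ : v.valuationSubring) = 1 := by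
        ext
        simp [hd', div_self hm]
      rw [h1, map_one]
    have hres0 : residue w.valuationSubring Y ≠ 0 := by
      rw [hYres]
      exact hdeg _ ⟨m, by rw [hdm]; exact one_ne_zero⟩
    have hwY : w (Y : L) = 1 := hone _ Y.2 hres0
    have hsum_eq : ∑ j : Fin f, algebraMap K L (c j) * t ^ (j : ℕ)
        = algebraMap K L (c m) * (Y : L) := by
      rw [hYval, Finset.mul_sum]
      refine Finset.sum_congr rfl fun j _ => ?_
      rw [← mul_assoc, ← map_mul]
      congr 2
      rw [hd', mul_comm, div_mul_cancel₀ _ hm]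
    rw [hsum_eq, map_mul, hext, hwY, mul_one]
  -- distinct values for distinct powers of α
  have hdist : ∀ i i' : Fin e, (i : ℕ) < (i' : ℕ) → ∀ a b : K, a ≠ 0 → b ≠ 0 →
      w α ^ (i : ℕ) * v a ≠ w α ^ (i' : ℕ) * v b := by
    intro i i' hlt a b ha hb heq
    have hk : (i' : ℕ) = (i : ℕ) + ((i' : ℕ) - (i : ℕ)) := by omega
    rw [hk, pow_add, mul_assoc] at heq
    have hcancel := mul_left_cancel₀ (pow_ne_zero _ hαw) heq
    have hvb : v b ≠ 0 := by simp [Valuation.zero_iff, hb]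
    refine hleast ((i' : ℕ) - (i : ℕ)) (by omega) (by have := i'.isLt; omega)
      ⟨a / b, div_ne_zero ha hb, ?_⟩
    rw [map_div₀, hcancel, mul_div_assoc, div_self hvb, mul_one]
  -- linear independence of the doubly-indexed family
  have hLI : LinearIndependent K (fun p : Fin e × Fin f => α ^ (p.1 : ℕ) * t ^ (p.2 : ℕ)) := by
    rw [Fintype.linearIndependent_iff]
    intro g hg
    by_contra hne
    push_neg at hne
    obtain ⟨p0, hp0⟩ := hne
    set T : Fin e → L :=
      fun i => α ^ (i : ℕ) * ∑ j : Fin f, algebraMap K L (g (i, j)) * t ^ (j : ℕ) with hT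
    have hgsum : ∑ i : Fin e, T i = 0 := by
      rw [← hg, Fintype.sum_prod_type]
      refine Finset.sum_congr rfl fun i _ => ?_
      simp only [hT]
      rw [Finset.mul_sum]
      refine Finset.sum_congr rfl fun j _ => ?_
      rw [Algebra.smul_def]
      ring
    have hrow : ∀ i : Fin e, (∃ j, g (i, j) ≠ 0) →
        ∃ c : K, c ≠ 0 ∧ w (T i) = w α ^ (i : ℕ) * v c := by
      rintro i ⟨j1, hj1⟩
      obtain ⟨m, -, hmax⟩ := Finset.exists_max_image Finset.univ
        (fun j => v (g (i, j))) ⟨j1, Finset.mem_univ _⟩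
      have hm0 : g (i, m) ≠ 0 := by
        intro h
        have h1 : v (g (i, j1)) ≤ 0 := by simpa [h] using hmax j1 (Finset.mem_univ _)
        exact hj1 ((Valuation.zero_iff v).mp (le_antisymm h1 zero_le'))
      refine ⟨g (i, m), hm0, ?_⟩
      simp only [hT]
      rw [map_mul, map_pow,
        lemA (fun j => g (i, j)) m hm0 (fun j => hmax j (Finset.mem_univ _))]
    have hTzeroR : ∀ i : Fin e, (¬∃ j, g (i, j) ≠ 0) → T i = 0 := by
      intro i hi
      push_neg at hi
      simp only [hT]
      simp [hi]
    obtain ⟨i0, -, hi0max⟩ := Finset.exists_max_image Finset.univ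
      (fun i => w (T i)) ⟨p0.1, Finset.mem_univ _⟩
    obtain ⟨c0, hc00, hc0⟩ := hrow p0.1 ⟨p0.2, hp0⟩
    have hT0ne : w (T i0) ≠ 0 := by
      intro h
      have h1 : w (T p0.1) ≤ 0 := by simpa [h] using hi0max p0.1 (Finset.mem_univ _)
      have h2 : w (T p0.1) = 0 := le_antisymm h1 zero_le'
      rw [hc0] at h2
      exact mul_ne_zero (pow_ne_zero _ hαw) (by simp [Valuation.zero_iff, hc00]) h2
    have hi0row : ∃ j, g (i0, j) ≠ 0 := by
      by_contra h
      rw [hTzeroR i0 h, map_zero] at hT0ne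
      exact hT0ne rfl
    obtain ⟨b0, hb00, hb0⟩ := hrow i0 hi0row
    have hlt : ∀ i : Fin e, i ≠ i0 → w (T i) < w (T i0) := by
      intro i hine
      have hi : i ∈ Finset.univ ∧ i ≠ i0 := ⟨Finset.mem_univ i, hine⟩
      by_cases hr : ∃ j, g (i, j) ≠ 0
      · obtain ⟨ci, hci0, hci⟩ := hrow i hr
        refine lt_of_le_of_ne (hi0max i (Finset.mem_univ _)) ?_
        rw [hci, hb0]
        rcases Nat.lt_or_ge (i : ℕ) (i0 : ℕ) with hlt' | hge
        · exact hdist i i0 hlt' ci b0 hci0 hb00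
        · have hlt'' : (i0 : ℕ) < (i : ℕ) := by
            rcases Nat.lt_or_ge (i0 : ℕ) (i : ℕ) with h | h
            · exact h
            · exact absurd (Fin.ext (by omega)) hi.2
          exact fun hq => hdist i0 i hlt'' b0 ci hb00 hci0 hq.symm
      · rw [hTzeroR i hr, map_zero]
        exact lt_of_le_of_ne zero_le' (Ne.symm hT0ne)
    have hfin := w.map_sum_eq_of_lt (Finset.mem_univ i0)
      (fun i hi => hlt i (by simp only [Finset.mem_sdiff, Finset.mem_singleton] at hi; exact hi.2))
    rw [hgsum, map_zero] at hfin
    exact hT0ne hfin.symm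
  -- conclude
  set S := IntermediateField.adjoin K {α} with hS
  have hαS : α ∈ S := IntermediateField.mem_adjoin_simple_self K α
  have htS : t ∈ S := by
    rw [htdef]
    exact div_mem (pow_mem hαS e) (S.algebraMap_mem u)
  have hmemS : ∀ p : Fin e × Fin f, α ^ (p.1 : ℕ) * t ^ (p.2 : ℕ) ∈ S :=
    fun p => mul_mem (pow_mem hαS _) (pow_mem htS _)
  have hLI' : LinearIndependent K
      (fun p : Fin e × Fin f => (⟨α ^ (p.1 : ℕ) * t ^ (p.2 : ℕ), hmemS p⟩ : S)) := by
    apply LinearIndependent.of_comp (S.val.toLinearMap)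
    exact hLI
  have hcard := hLI'.fintype_card_le_finrank
  rw [Fintype.card_prod, Fintype.card_fin, Fintype.card_fin] at hcard
  refine IntermediateField.eq_of_le_of_finrank_le le_top ?_
  rw [IntermediateField.finrank_top', hd]
  exact hcard
end

section
/- Let F be a field equipped with an additive valuation v with values in Γ ∪ {∞}, let K ⊆ F be a subfield, and let β ∈ F with β² ∈ K. Let σ : F → F be a field automorphism with σ(x) = x for all x ∈ K and v(σ(y)) = v(y) for all y ∈ F. Assume v(2) = 0 and that there exists a ∈ K with v(β − a) > v(a). Then σ(β) = β. -/
/-- A square root `β` of an element of `K` that is well-approximated by an element of `K`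
(i.e. `v(β - a) > v(a)` for some `a ∈ K`) is fixed by every value-preserving field
automorphism of `F` over `K`, provided `v(2) = 0`. -/
theorem fixed_of_approx {F Γ : Type*} [Field F] [AddCommGroup Γ] [LinearOrder Γ] [IsOrderedAddMonoid Γ]
    (v : F → WithTop Γ)
    (hv0 : ∀ x : F, v x = ⊤ ↔ x = 0)
    (hvmul : ∀ x y : F, v (x * y) = v x + v y)
    (hvadd : ∀ x y : F, min (v x) (v y) ≤ v (x + y))
    (hv2 : v 2 = 0)
    (K : Subfield F) (β : F) (hβ : β ^ 2 ∈ K)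
    (σ : F ≃+* F) (hσK : ∀ x ∈ K, σ x = x)
    (hσv : ∀ y : F, v (σ y) = v y)
    (happrox : ∃ a ∈ K, v a < v (β - a)) :
    σ β = β := by
  obtain ⟨a, haK, ha⟩ := happrox
  -- v 1 = 0
  have hvm1 : v (-1) = 0 := by
    have h := hvmul (-1) (-1)
    rw [show (-1 : F) * (-1) = 1 by ring] at h
    have h1 : v (1 : F) = 0 := by
      have h' := hvmul 1 1
      rw [one_mul] at h'
      cases hv : v (1 : F) with
      | top => exact absurd ((hv0 1).mp hv) one_ne_zero
      | coe g =>
        rw [hv] at h'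
        have hg : g + g = g := by exact_mod_cast h'.symm
        have : g = 0 := add_eq_right.mp hg
        simp [this]
    rw [h1] at h
    cases hv : v (-1 : F) with
    | top => rw [hv] at h; exact absurd h.symm (by simp)
    | coe g =>
      rw [hv] at h
      have hg : g + g = 0 := by exact_mod_cast h.symm
      have : g = 0 := eq_zero_of_neg_eq (eq_neg_iff_add_eq_zero.mpr hg).symm
      simp [this]
  have hvneg : ∀ x : F, v (-x) = v x := by
    intro x
    rw [show -x = (-1) * x by ring, hvmul, hvm1, zero_add]
  -- σ β = β or σ β = -β
  have hsq : σ β ^ 2 = β ^ 2 := by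
    have := hσK _ hβ
    rwa [map_pow] at this
  have hfac : (σ β - β) * (σ β + β) = 0 := by linear_combination hsq
  rcases mul_eq_zero.mp hfac with h | h
  · exact sub_eq_zero.mp h
  · exfalso
    have hσβ : σ β = -β := eq_neg_of_add_eq_zero_left h
    have hσa := hσK a haK
    have h1 : v (-β - a) = v (β - a) := by
      have := hσv (β - a)
      rwa [map_sub, hσβ, hσa] at this
    have h2 : v (β + a) = v (-β - a) := by
      rw [show β + a = -(-β - a) by ring, hvneg]
    have h3 : v (a - β) = v (β - a) := by
      rw [show a - β = -(β - a) by ring, hvneg]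
    have h4 : v (2 * a) = v a := by rw [hvmul, hv2, zero_add]
    have h5 := hvadd (a - β) (β + a)
    rw [show a - β + (β + a) = 2 * a by ring, h4] at h5
    exact absurd (lt_of_lt_of_le (lt_min (h3 ▸ ha) (by rw [h2, h1]; exact ha)) h5)
      (lt_irrefl _)
end

section
/- Let θ ∈ K̄ be algebraic of degree n over K, and let [A₀, A₁, …, A_r = {θ}] be a finite sequence of nonempty subsets of K̄ such that: each A_ℓ has common degree m_ℓ := deg_K A_ℓ over K with 1 = m₀ < m₁ < ⋯ < m_r = n; (OS0) for every 0 ≤ ℓ < r and every b ∈ K̄ with deg_K b < m_{ℓ+1}, there exists a ∈ A_ℓ with v(θ − b) ≤ v(θ − a); and (OS3) for every 0 ≤ ℓ < r, a ∈ A_ℓ and b ∈ A_{ℓ+1}, one has v(θ − a) < v(θ − b). Then for every 0 ≤ ℓ < r, m_{ℓ+1} is the least integer m > m_ℓ such that there exists ε ∈ D_m(θ) with ε > γ for all γ ∈ D_{m_ℓ}(θ). (That is, the degree sequence of any Okutsu sequence of θ equals the canonical sequence of minimal degrees of the distances of θ.) -/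
/-- The degree sequence of any Okutsu sequence of `θ` coincides with the canonical sequence
of minimal degrees of the distances of `θ`: for each `ℓ < r`, `m_{ℓ+1}` is the least integer
`m > m_ℓ` such that some `ε ∈ D_m(θ)` exceeds every `γ ∈ D_{m_ℓ}(θ)`. -/
theorem okutsu_degree_sequence {K Kbar Γ : Type*} [Field K] [Field Kbar] [Algebra K Kbar]
    [IsAlgClosure K Kbar] [AddCommGroup Γ] [LinearOrder Γ] [IsOrderedAddMonoid Γ]
    (v : Kbar → WithTop Γ)
    (hv0 : ∀ x : Kbar, v x = ⊤ ↔ x = 0)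
    (hvmul : ∀ x y : Kbar, v (x * y) = v x + v y)
    (hvadd : ∀ x y : Kbar, min (v x) (v y) ≤ v (x + y))
    (θ : Kbar) (n : ℕ) (hn : (minpoly K θ).natDegree = n)
    (r : ℕ) (A : Fin (r + 1) → Set Kbar) (m : Fin (r + 1) → ℕ)
    (hne : ∀ ℓ, (A ℓ).Nonempty)
    (hlast : A (Fin.last r) = {θ})
    (hdeg : ∀ ℓ, ∀ a ∈ A ℓ, (minpoly K a).natDegree = m ℓ)
    (hm0 : m 0 = 1) (hmlast : m (Fin.last r) = n)
    (hmono : StrictMono m)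
    (hOS0 : ∀ (ℓ : Fin r) (b : Kbar), (minpoly K b).natDegree < m ℓ.succ →
      ∃ a ∈ A ℓ.castSucc, v (θ - b) ≤ v (θ - a))
    (hOS3 : ∀ ℓ : Fin r, ∀ a ∈ A ℓ.castSucc, ∀ b ∈ A ℓ.succ, v (θ - a) < v (θ - b)) :
    ∀ ℓ : Fin r, IsLeast
      {m' : ℕ | m ℓ.castSucc < m' ∧
        ∃ ε ∈ distSet K v θ m', ∀ γ ∈ distSet K v θ (m ℓ.castSucc), γ < ε}
      (m ℓ.succ) := by
  intro ℓ
  obtain ⟨b, hb⟩ := hne ℓ.succ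
  constructor
  · refine ⟨hmono ((Fin.castSucc_lt_succ (i := ℓ))), v (θ - b), ⟨b, hdeg ℓ.succ b hb, rfl⟩, ?_⟩
    rintro γ ⟨c, hc, rfl⟩
    obtain ⟨a, ha, hle⟩ := hOS0 ℓ c (by rw [hc]; exact hmono ((Fin.castSucc_lt_succ (i := ℓ))))
    exact lt_of_le_of_lt hle (hOS3 ℓ a ha b hb)
  · rintro m' ⟨hlt, ε, ⟨c, hc, rfl⟩, hεall⟩
    by_contra h
    push_neg at h
    obtain ⟨a, ha, hle⟩ := hOS0 ℓ c (by rw [hc]; exact h)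
    exact absurd (hεall (v (θ - a)) ⟨a, hdeg ℓ.castSucc a ha, rfl⟩) (not_lt.2 hle)
end

section
/- Every algebraic element θ ∈ K̄ of degree n ≥ 1 over K admits an Okutsu sequence: there exist r ≥ 0 and nonempty subsets A₀, A₁, …, A_r of K̄ with A_r = {θ}, each A_ℓ of common degree m_ℓ over K with 1 = m₀ < m₁ < ⋯ < m_r = n, satisfying: (OS0) for every 0 ≤ ℓ < r and every b ∈ K̄ with deg_K b < m_{ℓ+1}, there exists a ∈ A_ℓ with v(θ − b) ≤ v(θ − a); (OS1) A_ℓ is a singleton whenever D_{m_ℓ}(θ) has a maximal element; (OS2) if D_{m_ℓ}(θ) has no maximal element, then the map a ↦ v(θ − a) is injective on A_ℓ and its image {v(θ − a) : a ∈ A_ℓ} is a well-ordered subset of Γ; and (OS3) for every 0 ≤ ℓ < r, a ∈ A_ℓ and b ∈ A_{ℓ+1}, one has v(θ − a) < v(θ − b). -/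
/-- Every nonempty subset of a linear order has a well-ordered cofinal subset. -/
theorem exists_isWF_cofinal {α : Type*} [LinearOrder α] (s : Set α) :
    ∃ t : Set α, t ⊆ s ∧ t.IsWF ∧ ∀ x ∈ s, ∃ y ∈ t, x ≤ y := by
  classical
  have hwf : WellFounded (WellOrderingRel (α := α)) :=
    (WellOrderingRel.isWellOrder (α := α)).wf
  refine ⟨{x | x ∈ s ∧ ∀ y ∈ s, WellOrderingRel y x → y < x}, fun x hx => hx.1, ?_, ?_⟩
  · have hsub : Subrelation
        (fun a b : {x | x ∈ s ∧ ∀ y ∈ s, WellOrderingRel y x → y < x} => (a : α) < (b : α))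
        (fun a b => WellOrderingRel (a : α) (b : α)) := by
      intro a b hab
      rcases trichotomous_of WellOrderingRel (a : α) (b : α) with h | h | h
      · exact h
      · exact absurd (h ▸ hab) (lt_irrefl _)
      · exact absurd (a.2.2 (b : α) b.2.1 h) (lt_asymm hab)
    have hinv : WellFounded fun (a b : {x | x ∈ s ∧ ∀ y ∈ s, WellOrderingRel y x → y < x}) =>
        WellOrderingRel (a : α) (b : α) :=
      InvImage.wf (fun a : {x | x ∈ s ∧ ∀ y ∈ s, WellOrderingRel y x → y < x} => (a : α)) hwf
    exact hsub.wf hinv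
  · intro x hx
    have hne : ({y | y ∈ s ∧ x ≤ y}).Nonempty := ⟨x, hx, le_rfl⟩
    obtain ⟨hy1, hy2⟩ := hwf.min_mem {y | y ∈ s ∧ x ≤ y} hne
    refine ⟨hwf.min {y | y ∈ s ∧ x ≤ y} hne, ⟨hy1, fun z hz hzy => ?_⟩, hy2⟩
    by_contra hlt
    push_neg at hlt
    exact hwf.not_lt_min {y | y ∈ s ∧ x ≤ y} ⟨hz, le_trans hy2 hlt⟩ hzy

/-- Every algebraic element `θ ∈ K̄` of degree `n ≥ 1` over `K` admits an Okutsu sequence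
`[A₀, …, A_r = {θ}]` satisfying (OS0), (OS1), (OS2) and (OS3). -/
theorem exists_okutsu_sequence {K Kbar Γ : Type*} [Field K] [Field Kbar] [Algebra K Kbar]
    [IsAlgClosure K Kbar] [AddCommGroup Γ] [LinearOrder Γ] [IsOrderedAddMonoid Γ]
    (v : Kbar → WithTop Γ)
    (hv0 : ∀ x : Kbar, v x = ⊤ ↔ x = 0)
    (hvmul : ∀ x y : Kbar, v (x * y) = v x + v y)
    (hvadd : ∀ x y : Kbar, min (v x) (v y) ≤ v (x + y))
    (θ : Kbar) (n : ℕ) (hn : (minpoly K θ).natDegree = n) (hn1 : 1 ≤ n) :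
    ∃ (r : ℕ) (A : Fin (r + 1) → Set Kbar) (m : Fin (r + 1) → ℕ),
      (∀ ℓ, (A ℓ).Nonempty) ∧
      A (Fin.last r) = {θ} ∧
      (∀ ℓ, ∀ a ∈ A ℓ, (minpoly K a).natDegree = m ℓ) ∧
      m 0 = 1 ∧ m (Fin.last r) = n ∧ StrictMono m ∧
      -- (OS0)
      (∀ (ℓ : Fin r) (b : Kbar), (minpoly K b).natDegree < m ℓ.succ →
        ∃ a ∈ A ℓ.castSucc, v (θ - b) ≤ v (θ - a)) ∧
      -- (OS1)
      (∀ ℓ : Fin r, (∃ δ, IsGreatest (distSet K v θ (m ℓ.castSucc)) δ) →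
        ∃ a : Kbar, A ℓ.castSucc = {a}) ∧
      -- (OS2)
      (∀ ℓ : Fin r, ¬(∃ δ, IsGreatest (distSet K v θ (m ℓ.castSucc)) δ) →
        Set.InjOn (fun a => v (θ - a)) (A ℓ.castSucc) ∧
          ((fun a => v (θ - a)) '' A ℓ.castSucc).IsWF) ∧
      -- (OS3)
      (∀ ℓ : Fin r, ∀ a ∈ A ℓ.castSucc, ∀ b ∈ A ℓ.succ, v (θ - a) < v (θ - b)) := by
  classical
  clear hvmul hvadd
  -- every element of Kbar has degree at least 1 over K
  have hdeg : ∀ b : Kbar, 1 ≤ (minpoly K b).natDegree := fun b =>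
    minpoly.natDegree_pos (Algebra.IsIntegral.isIntegral b)
  -- the set of "jump" degrees
  set M : Finset ℕ := (Finset.Icc 1 n).filter
      (fun mm => ∃ b : Kbar, (minpoly K b).natDegree = mm ∧
        ∀ b' : Kbar, (minpoly K b').natDegree < mm → v (θ - b') < v (θ - b)) with hM
  have hmem : ∀ j : ℕ, j ∈ M ↔ (1 ≤ j ∧ j ≤ n) ∧ ∃ b : Kbar,
      (minpoly K b).natDegree = j ∧
        ∀ b' : Kbar, (minpoly K b').natDegree < j → v (θ - b') < v (θ - b) := by
    intro j
    rw [hM, Finset.mem_filter, Finset.mem_Icc]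
  have h1M : (1 : ℕ) ∈ M := by
    refine (hmem 1).mpr ⟨⟨le_refl 1, hn1⟩, 0, ?_, ?_⟩
    · rw [minpoly.zero]; exact Polynomial.natDegree_X
    · intro b' hb'
      exact absurd hb' (by have := hdeg b'; omega)
  have hnM : n ∈ M := by
    refine (hmem n).mpr ⟨⟨hn1, le_refl n⟩, θ, hn, ?_⟩
    intro b' hb'
    have hne : θ - b' ≠ 0 := by
      intro h
      rw [sub_eq_zero] at h
      rw [← h, hn] at hb'
      omega
    have h1 : v (θ - θ) = ⊤ := by rw [sub_self]; exact (hv0 0).mpr rfl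
    rw [h1]
    exact lt_top_iff_ne_top.mpr (fun h => hne ((hv0 _).mp h))
  set L : List ℕ := M.sort (· ≤ ·) with hL
  have hLne : L ≠ [] := by
    intro h
    have h1 : (1 : ℕ) ∈ L := by rw [hL, Finset.mem_sort]; exact h1M
    rw [h] at h1
    exact absurd h1 List.not_mem_nil
  set r : ℕ := L.length - 1 with hr
  have hlen : L.length = r + 1 := by
    have : 0 < L.length := List.length_pos_iff.mpr hLne
    omega
  set m : Fin (r + 1) → ℕ := fun ℓ => L.get (Fin.cast hlen.symm ℓ) with hm
  have hLsorted : L.SortedLT := by rw [hL]; exact Finset.sortedLT_sort M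
  have hmono : StrictMono m := by
    intro a b hab
    exact hLsorted.strictMono_get (by rw [Fin.lt_def]; exact hab)
  have hmm : ∀ ℓ, m ℓ ∈ M := by
    intro ℓ
    rw [← Finset.mem_sort (α := ℕ) (· ≤ ·), ← hL]
    exact L.get_mem _
  have hsurj : ∀ j ∈ M, ∃ ℓ : Fin (r + 1), m ℓ = j := by
    intro j hj
    have hjL : j ∈ L := by rw [hL, Finset.mem_sort]; exact hj
    obtain ⟨i, hi⟩ := List.mem_iff_get.mp hjL
    refine ⟨Fin.cast hlen i, ?_⟩
    show L.get (Fin.cast hlen.symm (Fin.cast hlen i)) = j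
    exact (congrArg L.get (by ext : 1 <;> rfl)).trans hi
  have hm1 : ∀ ℓ, 1 ≤ m ℓ := fun ℓ => ((hmem _).mp (hmm ℓ)).1.1
  have hmn : ∀ ℓ, m ℓ ≤ n := fun ℓ => ((hmem _).mp (hmm ℓ)).1.2
  have hm0 : m 0 = 1 := by
    obtain ⟨ℓ, hℓ⟩ := hsurj 1 h1M
    have h2 := hmono.monotone (Fin.zero_le ℓ)
    have h3 := hm1 0
    omega
  have hmlast : m (Fin.last r) = n := by
    obtain ⟨ℓ, hℓ⟩ := hsurj n hnM
    have h2 := hmono.monotone (Fin.le_last ℓ)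
    have h3 := hmn (Fin.last r)
    omega
  -- no jumps strictly between consecutive entries
  have hgap : ∀ ℓ : Fin r, ∀ j ∈ M, m ℓ.castSucc < j → m ℓ.succ ≤ j := by
    intro ℓ j hj hlt
    obtain ⟨k, rfl⟩ := hsurj j hj
    have h1 : ℓ.castSucc < k := hmono.lt_iff_lt.mp hlt
    exact hmono.monotone (Fin.castSucc_lt_iff_succ_le.mp h1)
  -- domination lemma
  have hdom : ∀ ℓ : Fin (r + 1), ∀ d : ℕ, (∀ j ∈ M, m ℓ < j → d < j) → d < n →
      ∀ k : ℕ, ∀ b : Kbar, (minpoly K b).natDegree = k → k ≤ d →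
      ∃ δ' ∈ distSet K v θ (m ℓ), v (θ - b) ≤ δ' := by
    intro ℓ d hgapd hdn k
    induction k using Nat.strong_induction_on with
    | _ k ih =>
      intro b hb hkd
      rcases lt_trichotomy k (m ℓ) with hlt | heq | hgt
      · obtain ⟨b0, hb0, hb0'⟩ := ((hmem _).mp (hmm ℓ)).2
        exact ⟨v (θ - b0), ⟨b0, hb0, rfl⟩, (hb0' b (by omega)).le⟩
      · exact ⟨v (θ - b), ⟨b, by omega, rfl⟩, le_rfl⟩
      · have hkM : k ∉ M := fun hk => absurd hkd (not_le.mpr (hgapd k hk hgt))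
        have hnP : ¬ ∃ b : Kbar, (minpoly K b).natDegree = k ∧
            ∀ b' : Kbar, (minpoly K b').natDegree < k → v (θ - b') < v (θ - b) := by
          intro hPk
          exact hkM ((hmem k).mpr ⟨⟨by have := hdeg b; omega, by omega⟩, hPk⟩)
        push_neg at hnP
        obtain ⟨b', hb'1, hb'2⟩ := hnP b hb
        obtain ⟨δ', hδ', hle⟩ := ih ((minpoly K b').natDegree) (by omega) b' rfl (by omega)
        exact ⟨δ', hδ', le_trans hb'2 hle⟩
  -- construction of the level sets
  have key : ∀ ℓ : Fin (r + 1), ∃ A' : Set Kbar,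
      A'.Nonempty ∧
      (∀ a ∈ A', (minpoly K a).natDegree = m ℓ) ∧
      (∀ a ∈ A', ∀ b' : Kbar, (minpoly K b').natDegree < m ℓ → v (θ - b') < v (θ - a)) ∧
      ((∃ δ, IsGreatest (distSet K v θ (m ℓ)) δ) → ∃ a, A' = {a}) ∧
      (¬(∃ δ, IsGreatest (distSet K v θ (m ℓ)) δ) →
          Set.InjOn (fun a => v (θ - a)) A' ∧ ((fun a => v (θ - a)) '' A').IsWF) ∧
      (∀ δ' ∈ distSet K v θ (m ℓ), ∃ a ∈ A', δ' ≤ v (θ - a)) := by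
    intro ℓ
    obtain ⟨b0, hb0deg, hb0dom⟩ := ((hmem _).mp (hmm ℓ)).2
    have hb0mem : v (θ - b0) ∈ distSet K v θ (m ℓ) := ⟨b0, hb0deg, rfl⟩
    by_cases hmax : ∃ δ, IsGreatest (distSet K v θ (m ℓ)) δ
    · obtain ⟨δ, hδmem, hδub⟩ := hmax
      obtain ⟨a, hadeg, haδ⟩ := hδmem
      refine ⟨{a}, ⟨a, rfl⟩, ?_, ?_, fun _ => ⟨a, rfl⟩,
        fun h => absurd ⟨δ, ⟨a, hadeg, haδ⟩, hδub⟩ h, ?_⟩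
      · intro x hx
        rw [Set.mem_singleton_iff] at hx
        rw [hx]; exact hadeg
      · intro x hx b' hb'
        rw [Set.mem_singleton_iff] at hx
        rw [hx]
        exact lt_of_lt_of_le (hb0dom b' hb') (le_trans (hδub hb0mem) (le_of_eq haδ))
      · intro δ' hδ'
        exact ⟨a, rfl, le_trans (hδub hδ') (le_of_eq haδ)⟩
    · obtain ⟨t, hts, htwf, htcof⟩ :=
        exists_isWF_cofinal {δ | δ ∈ distSet K v θ (m ℓ) ∧ v (θ - b0) ≤ δ}
      have hch : ∀ δ ∈ t, ∃ b : Kbar, (minpoly K b).natDegree = m ℓ ∧ δ = v (θ - b) :=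
        fun δ hδ => (hts hδ).1
      choose! g hg1 hg2 using hch
      have hb0s : v (θ - b0) ∈ {δ | δ ∈ distSet K v θ (m ℓ) ∧ v (θ - b0) ≤ δ} :=
        ⟨hb0mem, le_rfl⟩
      have himg : (fun a => v (θ - a)) '' (g '' t) = t := by
        ext δ
        constructor
        · rintro ⟨a, ⟨δ', hδ', rfl⟩, rfl⟩
          show v (θ - g δ') ∈ t
          rw [← hg2 δ' hδ']
          exact hδ'
        · intro hδ
          exact ⟨g δ, ⟨δ, hδ, rfl⟩, (hg2 δ hδ).symm⟩
      refine ⟨g '' t, ?_, ?_, ?_, fun h => absurd h hmax, fun _ => ⟨?_, ?_⟩, ?_⟩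
      · obtain ⟨y, hy, _⟩ := htcof _ hb0s
        exact ⟨g y, y, hy, rfl⟩
      · rintro a ⟨δ, hδ, rfl⟩
        exact hg1 δ hδ
      · rintro a ⟨δ, hδ, rfl⟩ b' hb'
        have h1 : v (θ - b') < v (θ - b0) := hb0dom b' hb'
        have h2 : v (θ - b0) ≤ v (θ - g δ) := le_trans (hts hδ).2 (le_of_eq (hg2 δ hδ))
        exact lt_of_lt_of_le h1 h2
      · rintro a₁ ⟨δ₁, h₁, rfl⟩ a₂ ⟨δ₂, h₂, rfl⟩ h
        have h' : v (θ - g δ₁) = v (θ - g δ₂) := h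
        have : δ₁ = δ₂ := by rw [hg2 δ₁ h₁, hg2 δ₂ h₂, h']
        rw [this]
      · rw [himg]; exact htwf
      · intro δ' hδ'
        rcases le_total δ' (v (θ - b0)) with hle | hge
        · obtain ⟨y, hy, hy2⟩ := htcof _ hb0s
          exact ⟨g y, ⟨y, hy, rfl⟩, le_trans hle (le_trans hy2 (le_of_eq (hg2 y hy)))⟩
        · obtain ⟨y, hy, hy2⟩ := htcof δ' ⟨hδ', hge⟩
          exact ⟨g y, ⟨y, hy, rfl⟩, le_trans hy2 (le_of_eq (hg2 y hy))⟩
  choose A hA1 hA2 hA3 hA4 hA5 hA6 using key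
  set A' : Fin (r + 1) → Set Kbar := fun ℓ => if ℓ = Fin.last r then {θ} else A ℓ with hA'
  have hAcast : ∀ ℓ : Fin r, A' ℓ.castSucc = A ℓ.castSucc := by
    intro ℓ
    simp only [hA']
    exact if_neg (Fin.castSucc_lt_last ℓ).ne
  refine ⟨r, A', m, ?_, ?_, ?_, hm0, hmlast, hmono, ?_, ?_, ?_, ?_⟩
  · -- nonempty
    intro ℓ
    by_cases h : ℓ = Fin.last r
    · simp only [hA']; rw [if_pos h]; exact Set.singleton_nonempty θ
    · simp only [hA']; rw [if_neg h]; exact hA1 ℓ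
  · -- last is {θ}
    simp [hA']
  · -- common degree
    intro ℓ a ha
    by_cases h : ℓ = Fin.last r
    · simp only [hA'] at ha
      rw [if_pos h, Set.mem_singleton_iff] at ha
      rw [ha, hn, h, hmlast]
    · simp only [hA'] at ha
      rw [if_neg h] at ha
      exact hA2 ℓ a ha
  · -- (OS0)
    intro ℓ b hb
    have hd1 : 1 ≤ m ℓ.succ := hm1 _
    have hdn : m ℓ.succ - 1 < n := by have := hmn ℓ.succ; omega
    have hgapd : ∀ j ∈ M, m ℓ.castSucc < j → m ℓ.succ - 1 < j := by
      intro j hj hlt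
      have := hgap ℓ j hj hlt
      omega
    obtain ⟨δ', hδ'mem, hle⟩ := hdom ℓ.castSucc (m ℓ.succ - 1) hgapd hdn
      ((minpoly K b).natDegree) b rfl (by omega)
    obtain ⟨a, haA, hale⟩ := hA6 ℓ.castSucc δ' hδ'mem
    rw [hAcast ℓ]
    exact ⟨a, haA, le_trans hle hale⟩
  · -- (OS1)
    intro ℓ h
    rw [hAcast ℓ]
    exact hA4 ℓ.castSucc h
  · -- (OS2)
    intro ℓ h
    rw [hAcast ℓ]
    exact hA5 ℓ.castSucc h
  · -- (OS3)
    intro ℓ a ha b hb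
    rw [hAcast ℓ] at ha
    have hadeg : (minpoly K a).natDegree = m ℓ.castSucc := hA2 _ a ha
    have hmlt : m ℓ.castSucc < m ℓ.succ := hmono (Fin.castSucc_lt_succ (i := ℓ))
    by_cases h : ℓ.succ = Fin.last r
    · simp only [hA'] at hb
      rw [if_pos h, Set.mem_singleton_iff] at hb
      have hane : θ - a ≠ 0 := by
        intro heq
        rw [sub_eq_zero] at heq
        rw [← heq, hn] at hadeg
        have := hmn ℓ.succ
        rw [h, hmlast] at hmlt
        omega
      have h1 : v (θ - b) = ⊤ := by rw [hb, sub_self]; exact (hv0 0).mpr rfl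
      rw [h1]
      exact lt_top_iff_ne_top.mpr (fun hh => hane ((hv0 _).mp hh))
    · simp only [hA'] at hb
      rw [if_neg h] at hb
      exact hA3 ℓ.succ b hb a (by omega)
end
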